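/- Every (V*)-set in a Lipschitz-free space is separable: if M is a complete pointed metric space and Γ ⊂ F(M) is a (V*)-set with respect to F(M), then Γ is a separable subset of F(M). -/

import Mathlib

open Filter Topology Metric Set

noncomputable section

/-- A formal series `∑ yₙ` in a normed space `Y` is weakly unconditionally Cauchy (WUC)
if `∑ |⟨φ, yₙ⟩| < ∞` for every continuous linear functional `φ` on `Y`. -/
def IsWUC {Y : Type*} [SeminormedAddCommGroup Y] [NormedSpace ℝ Y] (y : ℕ → Y) : Prop :=
  ∀ φ : Y →L[ℝ] ℝ, Summable fun n => |φ (y n)|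

/-- `Γ` is a (V*)-set in `X`: for every WUC series `∑ fₙ` in the dual `X*`,
`sup_{x ∈ Γ} |⟨x, fₙ⟩| → 0`. -/
def IsVStarSet {X : Type*} [SeminormedAddCommGroup X] [NormedSpace ℝ X] (Γ : Set X) : Prop :=
  ∀ f : ℕ → (X →L[ℝ] ℝ), IsWUC f →
    ∀ ε > (0 : ℝ), ∀ᶠ n in atTop, ∀ x ∈ Γ, |f n x| ≤ ε

/-- `Γ` is relatively weakly compact: its closure in the weak topology is compact. -/
def RelWeaklyCompact {X : Type*} [SeminormedAddCommGroup X] [NormedSpace ℝ X]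
    (Γ : Set X) : Prop :=
  IsCompact (closure ((toWeakSpace ℝ X) '' Γ))

/-- A normed space has Pełczyński's property (V*) if every (V*)-set is relatively
weakly compact. -/
def HasPropertyVStar (X : Type*) [SeminormedAddCommGroup X] [NormedSpace ℝ X] : Prop :=
  ∀ Γ : Set X, IsVStarSet Γ → RelWeaklyCompact Γ

/-- `F`, together with the map `δ : M → F`, is (a realization of) the Lipschitz-free space
over the pointed metric space `(M, o)`: `δ` is a base-point-preserving isometric embedding
whose range has dense linear span, and every Lipschitz function `f : M → ℝ` vanishing at
the base point lifts to a continuous linear functional of norm at most `Lip(f)` (this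
characterizes `F(M)`, with dual `Lip₀(M)`, up to isometric isomorphism). -/
structure IsLipschitzFree {M : Type*} [MetricSpace M] (o : M)
    {F : Type*} [NormedAddCommGroup F] [NormedSpace ℝ F] (δ : M → F) : Prop where
  isometry : Isometry δ
  map_base : δ o = 0
  dense_span : Dense (Submodule.span ℝ (Set.range δ) : Set F)
  lift : ∀ (L : NNReal) (f : M → ℝ), LipschitzWith L f → f o = 0 →
    ∃ φ : F →L[ℝ] ℝ, ‖φ‖ ≤ L ∧ ∀ x, φ (δ x) = f x

/-- The subspace of `F` corresponding to the Lipschitz-free space `F(S)` over a subset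
`S ⊆ M`: the closed linear span of `δ(S)`. -/
def freeSpan {M : Type*} [MetricSpace M] {F : Type*} [NormedAddCommGroup F]
    [NormedSpace ℝ F] (δ : M → F) (S : Set M) : Submodule ℝ F :=
  (Submodule.span ℝ (δ '' S)).topologicalClosure

theorem mem_freeSpan {M : Type*} [MetricSpace M] {F : Type*} [NormedAddCommGroup F]
    [NormedSpace ℝ F] (δ : M → F) {S : Set M} {x : M} (hx : x ∈ S) :
    δ x ∈ freeSpan δ S :=
  (Submodule.span ℝ (δ '' S)).le_topologicalClosure
    (Submodule.subset_span ⟨x, hx, rfl⟩)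


/-! ### Auxiliary lemmas -/

section Aux
open scoped Pointwise

variable {M : Type*} [MetricSpace M] {F : Type*} [NormedAddCommGroup F] [NormedSpace ℝ F]
  {δ : M → F}

/-- A continuous linear functional vanishing on `δ '' C` vanishes on `freeSpan δ C`. -/
theorem freeSpan_pair_zero {C : Set M} {ψ : F →L[ℝ] ℝ}
    (h : ∀ x ∈ C, ψ (δ x) = 0) {μ : F} (hμ : μ ∈ freeSpan δ C) : ψ μ = 0 := by
  have hker : freeSpan δ C ≤ LinearMap.ker (ψ : F →ₗ[ℝ] ℝ) := by
    apply Submodule.topologicalClosure_minimal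
    · rw [Submodule.span_le]
      rintro z ⟨x, hx, rfl⟩
      simpa [LinearMap.mem_ker] using h x hx
    · exact ContinuousLinearMap.isClosed_ker ψ
  simpa [LinearMap.mem_ker] using hker hμ

theorem freeSpan_separable (hδc : Continuous δ) {C : Set M}
    (hC : TopologicalSpace.IsSeparable C) :
    TopologicalSpace.IsSeparable (freeSpan δ C : Set F) := by
  rw [freeSpan, Submodule.topologicalClosure_coe]
  exact ((hC.image hδc).span).closure

theorem freeSpan_mono {S T : Set M} (h : S ⊆ T) : freeSpan δ S ≤ freeSpan δ T :=
  Submodule.topologicalClosure_mono (Submodule.span_mono (Set.image_mono h))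

/-- Hahn–Banach separation of a point from a submodule, with norm control. -/
theorem exists_functional_of_far {E : Type*} [NormedAddCommGroup E] [NormedSpace ℝ E]
    (V : Submodule ℝ E) {μ : E} {ε : ℝ} (hε : 0 < ε)
    (h : ∀ v ∈ V, ε ≤ ‖μ - v‖) :
    ∃ φ : E →L[ℝ] ℝ, ‖φ‖ ≤ 1 ∧ (∀ v ∈ V, φ v = 0) ∧ ε / 2 ≤ φ μ := by
  classical
  set s : Set E := (V : Set E) + Metric.ball (0 : E) ε with hs
  have hconv : Convex ℝ s := V.convex.add (convex_ball 0 ε)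
  have hopen : IsOpen s := IsOpen.add_left isOpen_ball
  have hμs : μ ∉ s := by
    rintro ⟨v, hv, b, hb, rfl⟩
    have h1 : ε ≤ ‖b‖ := by simpa using h v hv
    have h2 : ‖b‖ < ε := by simpa [dist_eq_norm] using mem_ball_iff_norm.mp hb
    linarith
  obtain ⟨f, hf⟩ := geometric_hahn_banach_open_point hconv hopen hμs
  have hmem : ∀ v ∈ V, ∀ b ∈ Metric.ball (0 : E) ε, (v + b) ∈ s := by
    intro v hv b hb; exact ⟨v, hv, b, hb, rfl⟩
  have hb0 : (0 : E) ∈ Metric.ball (0 : E) ε := by simpa using hε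
  have hV0 : ∀ v ∈ V, f v = 0 := by
    intro v hv
    by_contra hne
    have hkey : ∀ c : ℝ, c * f v < f μ := by
      intro c
      have := hf _ (hmem (c • v) (V.smul_mem c hv) 0 hb0)
      simpa [map_smul, smul_eq_mul] using this
    have h1 := hkey ((f μ + 1) / f v)
    rw [div_mul_cancel₀ _ hne] at h1
    linarith
  have hball : ∀ b ∈ Metric.ball (0 : E) ε, f b < f μ := by
    intro b hb
    have := hf _ (hmem 0 V.zero_mem b hb)
    simpa using this
  have hfμpos : 0 < f μ := by simpa using hball 0 hb0
  have hnorm : ∀ x : E, |f x| ≤ 2 * f μ / ε * ‖x‖ := by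
    intro x
    rcases eq_or_ne x 0 with rfl | hx0
    · simp
    · have hxn : 0 < ‖x‖ := norm_pos_iff.mpr hx0
      set c : ℝ := ε / (2 * ‖x‖) with hc
      have hcpos : 0 < c := by positivity
      have hmemball : ∀ z : E, ‖z‖ = ε / 2 → z ∈ Metric.ball (0 : E) ε := by
        intro z hz
        rw [mem_ball_iff_norm, sub_zero, hz]
        linarith
      have hnorm1 : ‖c • x‖ = ε / 2 := by
        rw [norm_smul, Real.norm_eq_abs, abs_of_pos hcpos, hc]
        field_simp
      have hnorm2 : ‖c • (-x)‖ = ε / 2 := by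
        rw [norm_smul, Real.norm_eq_abs, abs_of_pos hcpos, norm_neg, hc]
        field_simp
      have h1 : c * f x < f μ := by
        have := hball _ (hmemball _ hnorm1)
        simpa [map_smul, smul_eq_mul] using this
      have h2 : -(c * f x) < f μ := by
        have := hball _ (hmemball _ hnorm2)
        simpa [map_smul, smul_eq_mul] using this
      have habs : c * |f x| ≤ f μ := by
        rw [← abs_of_pos hcpos, ← abs_mul]
        cases abs_cases (c * f x) with
        | inl hcase => rw [hcase.1]; linarith
        | inr hcase => rw [hcase.1]; linarith
      have hkey : c * (2 * f μ / ε * ‖x‖) = f μ := by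
        rw [hc]; field_simp
      have habs' : c * |f x| ≤ c * (2 * f μ / ε * ‖x‖) := by rw [hkey]; exact habs
      exact (mul_le_mul_iff_right₀ hcpos).mp habs'
  refine ⟨(ε / (2 * f μ)) • f, ?_, ?_, ?_⟩
  · apply ContinuousLinearMap.opNorm_le_bound _ zero_le_one
    intro x
    rw [ContinuousLinearMap.smul_apply, norm_smul, Real.norm_eq_abs, Real.norm_eq_abs,
      abs_of_pos (by positivity : (0:ℝ) < ε / (2 * f μ))]
    calc ε / (2 * f μ) * |f x| ≤ ε / (2 * f μ) * (2 * f μ / ε * ‖x‖) := by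
          apply mul_le_mul_of_nonneg_left (hnorm x) (by positivity)
      _ = ‖x‖ := by field_simp
      _ = 1 * ‖x‖ := (one_mul _).symm
  · intro v hv
    rw [ContinuousLinearMap.smul_apply, hV0 v hv, smul_zero]
  · rw [ContinuousLinearMap.smul_apply, smul_eq_mul]
    rw [div_mul_eq_mul_div, le_div_iff₀ (by positivity)]
    ring_nf
    nlinarith [hfμpos, hε]

end Aux

/-! ### Real auxiliary inequalities -/

section RealAux

/-- Soft-threshold is dominated: `|S_t r| ≤ |r|`. -/
theorem sth_abs_le {t r : ℝ} (ht : 0 ≤ t) : |max (r - t) (min (r + t) 0)| ≤ |r| := by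
  rw [abs_le]
  constructor
  · refine le_max_of_le_right (le_min ?_ ?_)
    · linarith [neg_abs_le r]
    · linarith [abs_nonneg r]
  · refine max_le ?_ ((min_le_right _ _).trans (abs_nonneg r))
    linarith [le_abs_self r]

theorem sth_sub_le {t r : ℝ} (ht : 0 ≤ t) : |max (r - t) (min (r + t) 0) - r| ≤ t := by
  rw [abs_le]
  constructor
  · have := le_max_left (r - t) (min (r + t) 0)
    linarith
  · have h1 : max (r - t) (min (r + t) 0) ≤ r + t :=
      max_le (by linarith) ((min_le_left _ _))
    linarith

theorem sth_eq_zero {t r : ℝ} (h : |r| ≤ t) : max (r - t) (min (r + t) 0) = 0 := by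
  rw [abs_le] at h
  rw [min_eq_right (by linarith), max_eq_right (by linarith)]

theorem sth_lip {t : ℝ} (a b : ℝ) :
    |max (a - t) (min (a + t) 0) - max (b - t) (min (b + t) 0)| ≤ |a - b| := by
  calc |max (a - t) (min (a + t) 0) - max (b - t) (min (b + t) 0)|
      ≤ max |a - t - (b - t)| |min (a + t) 0 - min (b + t) 0| :=
        abs_max_sub_max_le_max _ _ _ _
    _ ≤ |a - b| := by
        refine max_le (by rw [show a - t - (b - t) = a - b by ring]) ?_
        refine (abs_min_sub_min_le_max _ _ _ _).trans ?_
        rw [show a + t - (b + t) = a - b by ring]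
        exact max_le le_rfl (by simp)

theorem clamp_eq_self {D u : ℝ} (h : |u| ≤ D) : max (-D) (min u D) = u := by
  rw [abs_le] at h
  rw [min_eq_left h.2, max_eq_right h.1]

theorem clamp_abs_le {D u : ℝ} (hD : 0 ≤ D) : |max (-D) (min u D)| ≤ D := by
  rw [abs_le]
  exact ⟨le_max_left _ _, max_le (by linarith) (min_le_right _ _)⟩

theorem clamp_lip {D : ℝ} (a b : ℝ) :
    |max (-D) (min a D) - max (-D) (min b D)| ≤ |a - b| := by
  calc |max (-D) (min a D) - max (-D) (min b D)|
      ≤ max |(-D) - (-D)| |min a D - min b D| := abs_max_sub_max_le_max _ _ _ _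
    _ ≤ |a - b| := by
        refine max_le (by simp) ?_
        refine (abs_min_sub_min_le_max _ _ _ _).trans ?_
        exact max_le le_rfl (by simp)

end RealAux

/-! ### The one-step construction -/

section Step

variable {M : Type*} [MetricSpace M] {F : Type*} [NormedAddCommGroup F] [NormedSpace ℝ F]

/-- The data constructed at each step of the transfinite recursion. -/
structure StepSD (o : M) (δ : M → F) (Γ : Set F) (ε : ℝ) where
  S : Set M
  C : Set M
  μ : F
  g : M → ℝ
  ψ : F →L[ℝ] ℝ
  t : ℝ
  D : ℝ
  hμΓ : μ ∈ Γ
  hC : TopologicalSpace.IsSeparable C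
  hoC : o ∈ C
  ht : 0 < t
  ht1 : t ≤ 1
  hD : 1 ≤ D
  hglip : ∀ x y, |g x - g y| ≤ 3 * D / t * dist x y
  hgo : g o = 0
  hcone : ∀ x, |g x| ≤ 3 * D / t * max 0 (t / 3 - infDist x C)
  hvan : ∀ x, infDist x S ≤ t → g x = 0
  hψδ : ∀ x, ψ (δ x) = g x
  hpair : ε / 4 ≤ ψ μ

theorem step_exists {o : M} {δ : M → F} (hδ : IsLipschitzFree o δ) {Γ : Set F} {ε : ℝ}
    (hε : 0 < ε) (S : Set M) (hoS : o ∈ S)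
    (h : ∃ μ ∈ Γ, ∀ v ∈ freeSpan δ S, ε ≤ ‖μ - v‖) :
    ∃ sd : StepSD o δ Γ ε, sd.S = S := by
  classical
  obtain ⟨μ, hμΓ, hfar⟩ := h
  obtain ⟨φ, hφn, hφ0, hφμ⟩ := exists_functional_of_far (freeSpan δ S) hε hfar
  set f : M → ℝ := fun x => φ (δ x) with hf_def
  have hf1 : ∀ x y, |f x - f y| ≤ dist x y := by
    intro x y
    have h1 : f x - f y = φ (δ x - δ y) := by simp [hf_def, map_sub]
    rw [h1, ← Real.norm_eq_abs]
    calc ‖φ (δ x - δ y)‖ ≤ ‖φ‖ * ‖δ x - δ y‖ := φ.le_opNorm _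
      _ ≤ 1 * ‖δ x - δ y‖ := mul_le_mul_of_nonneg_right hφn (norm_nonneg _)
      _ = dist (δ x) (δ y) := by rw [one_mul, dist_eq_norm]
      _ = dist x y := hδ.isometry.dist_eq x y
  have hfS : ∀ x ∈ S, f x = 0 := fun x hx => hφ0 _ (mem_freeSpan δ hx)
  have hfo : f o = 0 := hfS o hoS
  have hfabs : ∀ x, |f x| ≤ infDist x S := by
    intro x
    by_contra hcon
    push_neg at hcon
    obtain ⟨y, hyS, hyd⟩ := (Metric.infDist_lt_iff ⟨o, hoS⟩).mp hcon
    have h2 := hf1 x y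
    rw [hfS y hyS, sub_zero] at h2
    linarith
  -- finite approximation
  have hμcl : μ ∈ closure (Submodule.span ℝ (Set.range δ) : Set F) := hδ.dense_span μ
  rw [Metric.mem_closure_iff] at hμcl
  obtain ⟨ν, hνmem, hνd⟩ := hμcl (ε / 32) (by positivity)
  rw [dist_eq_norm] at hνd
  obtain ⟨n, a, q, hq⟩ := Submodule.mem_span_set'.mp hνmem
  choose p hp using fun i => (q i).2
  have hν : ν = ∑ i, a i • δ (p i) := by
    rw [← hq]; exact (Finset.sum_congr rfl fun i _ => by rw [hp i]).symm
  set A := ∑ i, |a i| with hA_def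
  have hA0 : 0 ≤ A := Finset.sum_nonneg fun i _ => abs_nonneg _
  set t := min (ε / (32 * (A + 1))) 1 with ht_def
  have htpos : 0 < t := lt_min (by positivity) one_pos
  have ht1 : t ≤ 1 := min_le_right _ _
  have hAt : A * t ≤ ε / 32 := by
    have h1 : t ≤ ε / (32 * (A + 1)) := min_le_left _ _
    have h2 : A * t ≤ A * (ε / (32 * (A + 1))) := mul_le_mul_of_nonneg_left h1 hA0
    have h3 : (ε / (32 * (A + 1))) * (32 * (A + 1)) = ε := by field_simp
    nlinarith [hA0, hε]
  set g1 : M → ℝ := fun x => max (f x - t) (min (f x + t) 0) with hg1_def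
  have hg1lip : ∀ x y, |g1 x - g1 y| ≤ dist x y := fun x y => (sth_lip _ _).trans (hf1 x y)
  set D := 1 + ∑ i, |f (p i)| with hD_def
  have hD1 : 1 ≤ D := by
    have : 0 ≤ ∑ i, |f (p i)| := Finset.sum_nonneg fun i _ => abs_nonneg _
    linarith
  have hDfp : ∀ i, |f (p i)| ≤ D := by
    intro i
    have := Finset.single_le_sum (f := fun i => |f (p i)|)
      (fun i _ => abs_nonneg _) (Finset.mem_univ i)
    linarith
  set g2 : M → ℝ := fun x => max (-D) (min (g1 x) D) with hg2_def
  have hg2lip : ∀ x y, |g2 x - g2 y| ≤ dist x y := fun x y => (clamp_lip _ _).trans (hg1lip x y)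
  have hg2abs : ∀ x, |g2 x| ≤ D := fun x => clamp_abs_le (by linarith)
  have hg2o : g2 o = 0 := by
    have h1 : g1 o = 0 := by
      rw [hg1_def]; exact sth_eq_zero (by rw [hfo, abs_zero]; exact htpos.le)
    rw [hg2_def]
    simp only [h1]
    exact clamp_eq_self (by rw [abs_zero]; linarith)
  have hlipg2 : LipschitzWith 1 g2 :=
    LipschitzWith.of_dist_le_mul fun x y => by
      rw [Real.dist_eq, NNReal.coe_one, one_mul]; exact hg2lip x y
  obtain ⟨ψ2, hψ2n, hψ2δ⟩ := hδ.lift 1 g2 hlipg2 hg2o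
  rw [NNReal.coe_one] at hψ2n
  -- pairing estimates
  have hφν : ε / 2 - ε / 32 ≤ φ ν := by
    have h1 : φ μ - φ ν = φ (μ - ν) := by rw [map_sub]
    have h2 : |φ (μ - ν)| ≤ ε / 32 := by
      rw [← Real.norm_eq_abs]
      calc ‖φ (μ - ν)‖ ≤ ‖φ‖ * ‖μ - ν‖ := φ.le_opNorm _
        _ ≤ 1 * (ε / 32) := mul_le_mul hφn hνd.le (norm_nonneg _) zero_le_one
        _ = ε / 32 := one_mul _
    have := abs_le.mp h2
    linarith
  have hψ2ν : ψ2 ν = ∑ i, a i * g2 (p i) := by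
    rw [hν, map_sum]
    exact Finset.sum_congr rfl fun i _ => by rw [map_smul, smul_eq_mul, hψ2δ]
  have hφνval : φ ν = ∑ i, a i * f (p i) := by
    rw [hν, map_sum]
    exact Finset.sum_congr rfl fun i _ => by rw [map_smul, smul_eq_mul]
  have hg2p : ∀ i, g2 (p i) = g1 (p i) := by
    intro i
    rw [hg2_def]
    exact clamp_eq_self ((sth_abs_le htpos.le).trans (hDfp i))
  have hdiffp : ∀ i, |g2 (p i) - f (p i)| ≤ t := by
    intro i
    rw [hg2p i, hg1_def]
    exact sth_sub_le htpos.le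
  have hsumdiff : |ψ2 ν - φ ν| ≤ ε / 32 := by
    rw [hψ2ν, hφνval, ← Finset.sum_sub_distrib]
    calc |∑ i, (a i * g2 (p i) - a i * f (p i))|
        ≤ ∑ i, |a i * g2 (p i) - a i * f (p i)| := Finset.abs_sum_le_sum_abs _ _
      _ = ∑ i, |a i| * |g2 (p i) - f (p i)| := by
          exact Finset.sum_congr rfl fun i _ => by rw [← mul_sub, abs_mul]
      _ ≤ ∑ i, |a i| * t :=
          Finset.sum_le_sum fun i _ => mul_le_mul_of_nonneg_left (hdiffp i) (abs_nonneg _)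
      _ = A * t := by rw [hA_def, Finset.sum_mul]
      _ ≤ ε / 32 := hAt
  have hψ2μ : ε / 4 ≤ ψ2 μ := by
    have h1 : ψ2 μ - ψ2 ν = ψ2 (μ - ν) := by rw [map_sub]
    have h2 : |ψ2 (μ - ν)| ≤ ε / 32 := by
      rw [← Real.norm_eq_abs]
      calc ‖ψ2 (μ - ν)‖ ≤ ‖ψ2‖ * ‖μ - ν‖ := ψ2.le_opNorm _
        _ ≤ 1 * (ε / 32) := mul_le_mul hψ2n hνd.le (norm_nonneg _) zero_le_one
        _ = ε / 32 := one_mul _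
    have h3 := abs_le.mp h2
    have h4 := abs_le.mp hsumdiff
    linarith
  -- the separable support set C
  have hνs : ∀ j : ℕ, ∃ w ∈ (Submodule.span ℝ (Set.range δ) : Set F), ‖μ - w‖ < 1 / (j + 1) := by
    intro j
    have hm := hδ.dense_span μ
    rw [Metric.mem_closure_iff] at hm
    obtain ⟨w, h1, h2⟩ := hm (1 / (j + 1)) (by positivity)
    exact ⟨w, h1, by rwa [dist_eq_norm] at h2⟩
  choose νs hνsmem hνsd using hνs
  have hCs : ∀ j : ℕ, ∃ c : Set M, c.Countable ∧ νs j ∈ Submodule.span ℝ (δ '' c) := by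
    intro j
    obtain ⟨n', a', q', hq'⟩ := Submodule.mem_span_set'.mp (hνsmem j)
    choose p' hp' using fun i => (q' i).2
    refine ⟨Set.range p', countable_range _, ?_⟩
    rw [← hq']
    exact Submodule.sum_mem _ fun i _ =>
      Submodule.smul_mem _ _ (Submodule.subset_span ⟨p' i, ⟨i, rfl⟩, hp' i⟩)
  choose Cs hCscnt hCsmem using hCs
  set C : Set M := closure ({o} ∪ (Set.range p ∪ ⋃ j, Cs j)) with hC_def
  have hCsep : TopologicalSpace.IsSeparable C :=
    (((countable_singleton o).union
      ((countable_range p).union (countable_iUnion hCscnt))).isSeparable).closure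
  have hoC : o ∈ C := subset_closure (Or.inl rfl)
  have hpC : ∀ i, p i ∈ C := fun i => subset_closure (Or.inr (Or.inl ⟨i, rfl⟩))
  have hμC : μ ∈ freeSpan δ C := by
    have hcl : IsClosed (freeSpan δ C : Set F) := Submodule.isClosed_topologicalClosure _
    have hmem : μ ∈ closure (freeSpan δ C : Set F) := by
      rw [Metric.mem_closure_iff]
      intro r hr
      obtain ⟨j, hj⟩ := exists_nat_one_div_lt hr
      refine ⟨νs j, ?_, ?_⟩
      · have hsub : Submodule.span ℝ (δ '' Cs j) ≤ freeSpan δ C :=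
          le_trans (Submodule.span_mono (Set.image_mono
            (fun x hx => subset_closure (Or.inr (Or.inr (Set.mem_iUnion.mpr ⟨j, hx⟩))))))
            (Submodule.le_topologicalClosure _)
        exact hsub (hCsmem j)
      · rw [dist_eq_norm]
        exact (hνsd j).trans hj
    rwa [hcl.closure_eq] at hmem
  -- the localization
  set L := 3 * D / t with hL_def
  have hL1 : 1 ≤ L := by
    rw [hL_def, le_div_iff₀ htpos]
    nlinarith
  have hLpos : 0 < L := lt_of_lt_of_le one_pos hL1
  set w : M → ℝ := fun x => min D (L * max 0 (t / 3 - infDist x C)) with hw_def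
  have hw0 : ∀ x, 0 ≤ w x := fun x => le_min (by linarith) (by positivity)
  have hinf_lip : ∀ x y : M, |infDist x C - infDist y C| ≤ dist x y := by
    intro x y
    have := (Metric.lipschitz_infDist_pt C).dist_le_mul x y
    rwa [Real.dist_eq, NNReal.coe_one, one_mul] at this
  have hwlip : ∀ x y, |w x - w y| ≤ L * dist x y := by
    intro x y
    refine (abs_min_sub_min_le_max _ _ _ _).trans (max_le ?_ ?_)
    · rw [sub_self, abs_zero]
      positivity
    · calc |L * max 0 (t / 3 - infDist x C) - L * max 0 (t / 3 - infDist y C)|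
          = L * |max 0 (t / 3 - infDist x C) - max 0 (t / 3 - infDist y C)| := by
            rw [← mul_sub, abs_mul, abs_of_pos hLpos]
        _ ≤ L * |infDist y C - infDist x C| := by
            refine mul_le_mul_of_nonneg_left ?_ hLpos.le
            refine (abs_max_sub_max_le_max _ _ _ _).trans (max_le (by simp) ?_)
            rw [show t / 3 - infDist x C - (t / 3 - infDist y C)
              = infDist y C - infDist x C by ring]
        _ ≤ L * dist x y := by
            refine mul_le_mul_of_nonneg_left ?_ hLpos.le
            rw [abs_sub_comm]
            exact hinf_lip x y
  have hwC : ∀ x ∈ C, w x = D := by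
    intro x hx
    have h0 : infDist x C = 0 := Metric.infDist_zero_of_mem hx
    have h1 : L * max 0 (t / 3 - 0) = D := by
      rw [sub_zero, max_eq_right (by positivity), hL_def]
      field_simp
    rw [hw_def]
    simp only [h0, h1]
    exact min_self D
  have hwcone : ∀ x, w x ≤ L * max 0 (t / 3 - infDist x C) := fun x => min_le_right _ _
  set g : M → ℝ := fun x => max (-(w x)) (min (g2 x) (w x)) with hg_def
  have hgabs : ∀ x, |g x| ≤ w x := by
    intro x
    rw [abs_le]
    constructor
    · exact le_max_left _ _
    · exact max_le (by linarith [hw0 x]) (min_le_right _ _)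
  have hcone : ∀ x, |g x| ≤ L * max 0 (t / 3 - infDist x C) :=
    fun x => (hgabs x).trans (hwcone x)
  have hgC : ∀ x ∈ C, g x = g2 x := by
    intro x hx
    rw [hg_def]
    simp only [hwC x hx]
    exact clamp_eq_self (hg2abs x)
  have hglip : ∀ x y, |g x - g y| ≤ L * dist x y := by
    intro x y
    refine (abs_max_sub_max_le_max _ _ _ _).trans (max_le ?_ ?_)
    · rw [show -(w x) - -(w y) = -(w x - w y) by ring, abs_neg]
      exact hwlip x y
    · refine (abs_min_sub_min_le_max _ _ _ _).trans (max_le ?_ (hwlip x y))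
      exact (hg2lip x y).trans (le_mul_of_one_le_left dist_nonneg hL1)
  have hzero_of : ∀ x, g2 x = 0 → g x = 0 := by
    intro x hx
    rw [hg_def]
    simp only [hx]
    rw [min_eq_left (hw0 x), max_eq_right (neg_nonpos.mpr (hw0 x))]
  have hgo : g o = 0 := hzero_of o hg2o
  have hvan : ∀ x, infDist x S ≤ t → g x = 0 := by
    intro x hx
    refine hzero_of x ?_
    have h1 : g1 x = 0 := by
      rw [hg1_def]
      exact sth_eq_zero ((hfabs x).trans hx)
    rw [hg2_def]
    simp only [h1]
    exact clamp_eq_self (by rw [abs_zero]; linarith)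
  have hlipg : LipschitzWith (Real.toNNReal L) g :=
    LipschitzWith.of_dist_le_mul fun x y => by
      rw [Real.dist_eq, Real.coe_toNNReal _ hLpos.le]
      exact hglip x y
  obtain ⟨ψ, hψn, hψδ⟩ := hδ.lift _ g hlipg hgo
  have hψμ : ψ μ = ψ2 μ := by
    have hz : ∀ x ∈ C, (ψ2 - ψ) (δ x) = 0 := by
      intro x hx
      rw [ContinuousLinearMap.sub_apply, hψ2δ, hψδ, hgC x hx, sub_self]
    have h0 := freeSpan_pair_zero hz hμC
    rw [ContinuousLinearMap.sub_apply] at h0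
    linarith
  exact ⟨⟨S, C, μ, g, ψ, t, D, hμΓ, hCsep, hoC, htpos, ht1, hD1, hglip, hgo, hcone,
    hvan, hψδ, by rw [hψμ]; exact hψ2μ⟩, rfl⟩

end Step

/-! ### The transfinite chain -/

section Chain

/-- A fixed index type of order type `ω₁`. -/
abbrev SDIdx : Type := (Cardinal.aleph 1 : Cardinal.{0}).ord.ToType

variable {M : Type*} [MetricSpace M] {F : Type*} [NormedAddCommGroup F] [NormedSpace ℝ F]

theorem countable_Iio_toType (i : SDIdx) :
    Countable {j : SDIdx // j < i} := by
  have h := Cardinal.mk_Iio_ord_toType i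
  rw [← Cardinal.countable_iff_lt_aleph_one] at h
  exact h.to_subtype

theorem uncountable_toType : ¬Countable SDIdx := by
  intro h
  have h1 : Cardinal.mk SDIdx ≤ Cardinal.aleph0 := Cardinal.mk_le_aleph0
  rw [Cardinal.mk_toType, Cardinal.card_ord] at h1
  exact absurd h1 (not_le.mpr Cardinal.aleph0_lt_aleph_one)

set_option maxHeartbeats 1000000 in
theorem exists_chain {o : M} {δ : M → F} (hδ : IsLipschitzFree o δ) {Γ : Set F} {ε : ℝ}
    (hε : 0 < ε)
    (hA : ∀ S : Set M, TopologicalSpace.IsSeparable S → o ∈ S →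
      ∃ μ ∈ Γ, ∀ v ∈ freeSpan δ S, ε ≤ ‖μ - v‖) :
    ∃ sd : SDIdx → StepSD o δ Γ ε,
      ∀ i j : SDIdx, i < j → (sd i).C ⊆ (sd j).S := by
  classical
  have wf : WellFounded ((· < ·) : SDIdx →
      SDIdx → Prop) := wellFounded_lt
  let bigS : ∀ i : SDIdx,
      (∀ j, j < i → StepSD o δ Γ ε) → Set M := fun i ih =>
    closure ({o} ∪ ⋃ j : {j // j < i}, (ih j.1 j.2).C)
  have ho : ∀ i ih, o ∈ bigS i ih := fun i ih => subset_closure (Or.inl rfl)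
  have hsep : ∀ i ih, TopologicalSpace.IsSeparable (bigS i ih) := by
    intro i ih
    have : Countable {j // j < i} := countable_Iio_toType i
    exact (((countable_singleton o).isSeparable).union
      (TopologicalSpace.IsSeparable.iUnion
        (s := fun j : {j // j < i} => (ih j.1 j.2).C) fun j => (ih j.1 j.2).hC)).closure
  let body : ∀ i : SDIdx,
      (∀ j, j < i → StepSD o δ Γ ε) → StepSD o δ Γ ε := fun i ih =>
    (step_exists hδ hε (bigS i ih) (ho i ih) (hA _ (hsep i ih) (ho i ih))).choose
  let sd : SDIdx → StepSD o δ Γ ε := WellFounded.fix wf body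
  have hS : ∀ i, (sd i).S = bigS i (fun j _ => sd j) := by
    intro i
    have hfix : sd i = body i (fun j _ => sd j) := WellFounded.fix_eq wf body i
    rw [hfix]
    exact (step_exists hδ hε (bigS i fun j _ => sd j) (ho i fun j _ => sd j)
      (hA _ (hsep i fun j _ => sd j) (ho i fun j _ => sd j))).choose_spec
  refine ⟨sd, fun i j hij => ?_⟩
  rw [hS j]
  intro x hx
  exact subset_closure (Or.inr (Set.mem_iUnion.mpr ⟨⟨i, hij⟩, hx⟩))

end Chain

/-! ### The main theorem -/

set_option maxHeartbeats 2000000 in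
/-- **(V*)-sets in Lipschitz-free spaces are separable**: if `Γ ⊆ F(M)` is a (V*)-set
with respect to `F(M)`, then `Γ` is a separable subset of `F(M)`. -/
theorem vStarSet_separable
    {M : Type*} [MetricSpace M] [CompleteSpace M] (o : M)
    {F : Type*} [NormedAddCommGroup F] [NormedSpace ℝ F] [CompleteSpace F]
    (δ : M → F) (hδ : IsLipschitzFree o δ)
    (Γ : Set F) (hΓ : IsVStarSet Γ) :
    TopologicalSpace.IsSeparable Γ := by
  classical
  by_contra hsep
  -- Step 1: a uniform ε > 0 such that Γ escapes every separable free subspace.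
  have hclaim : ∃ ε : ℝ, 0 < ε ∧ ∀ S : Set M, TopologicalSpace.IsSeparable S → o ∈ S →
      ∃ μ ∈ Γ, ∀ v ∈ freeSpan δ S, ε ≤ ‖μ - v‖ := by
    by_contra hcon
    push_neg at hcon
    have hex : ∀ n : ℕ, ∃ S : Set M, TopologicalSpace.IsSeparable S ∧ o ∈ S ∧
        ∀ μ ∈ Γ, ∃ v ∈ freeSpan δ S, ‖μ - v‖ < 1 / (n + 1) :=
      fun n => hcon (1 / (n + 1)) (by positivity)
    choose Sg hSsep hSo hfar using hex
    have hTsep : TopologicalSpace.IsSeparable (⋃ n, Sg n) :=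
      TopologicalSpace.IsSeparable.iUnion hSsep
    have hsub : ∀ n, freeSpan δ (Sg n) ≤ freeSpan δ (⋃ n, Sg n) :=
      fun n => freeSpan_mono (Set.subset_iUnion _ n)
    have hΓT : Γ ⊆ (freeSpan δ (⋃ n, Sg n) : Set F) := by
      intro μ hμ
      have hcl : IsClosed (freeSpan δ (⋃ n, Sg n) : Set F) :=
        Submodule.isClosed_topologicalClosure _
      have hmem : μ ∈ closure (freeSpan δ (⋃ n, Sg n) : Set F) := by
        rw [Metric.mem_closure_iff]
        intro r hr
        obtain ⟨n, hn⟩ := exists_nat_one_div_lt hr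
        obtain ⟨v, hv, hvd⟩ := hfar n μ hμ
        exact ⟨v, hsub n hv, by rw [dist_eq_norm]; exact hvd.trans hn⟩
      rwa [hcl.closure_eq] at hmem
    exact hsep ((freeSpan_separable hδ.isometry.continuous hTsep).mono hΓT)
  obtain ⟨ε, hε, hA⟩ := hclaim
  -- Step 2: the ω₁-chain.
  obtain ⟨sd, hchain⟩ := exists_chain hδ hε hA
  -- Step 3: pigeonhole the scales.
  have htex : ∀ i : SDIdx, ∃ k : ℕ, ((2:ℝ)⁻¹) ^ (k + 1) < (sd i).t := by
    intro i
    obtain ⟨k, hk⟩ := exists_pow_lt_of_lt_one (sd i).ht (by norm_num : (2:ℝ)⁻¹ < 1)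
    refine ⟨k, lt_of_le_of_lt ?_ hk⟩
    exact pow_le_pow_of_le_one (by norm_num) (by norm_num) (Nat.le_succ k)
  have hDex : ∀ i : SDIdx, ∃ l : ℕ, (sd i).D < 2 ^ (l + 1) := by
    intro i
    obtain ⟨l, hl⟩ := pow_unbounded_of_one_lt (sd i).D (by norm_num : (1:ℝ) < 2)
    exact ⟨l, hl.trans_le (pow_le_pow_right₀ (by norm_num) (Nat.le_succ l))⟩
  have hfiber : ∃ pr : ℕ × ℕ,
      {i | Nat.find (htex i) = pr.1 ∧ Nat.find (hDex i) = pr.2}.Infinite := by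
    by_contra hfin
    push_neg at hfin
    have hcnt : (Set.univ : Set (SDIdx)).Countable := by
      have hcover : (Set.univ : Set (SDIdx)) ⊆
          ⋃ pr : ℕ × ℕ, {i | Nat.find (htex i) = pr.1 ∧ Nat.find (hDex i) = pr.2} := by
        intro i _
        exact Set.mem_iUnion.mpr ⟨(Nat.find (htex i), Nat.find (hDex i)), rfl, rfl⟩
      exact ((Set.countable_iUnion fun pr => (hfin pr).countable).mono hcover)
    exact uncountable_toType (Set.countable_univ_iff.mp hcnt)
  obtain ⟨⟨k₀, l₀⟩, hinf⟩ := hfiber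
  set τ : ℝ := ((2:ℝ)⁻¹) ^ (k₀ + 1) with hτ_def
  set T2 : ℝ := (2:ℝ) ^ (l₀ + 1) with hT2_def
  have hτpos : 0 < τ := by positivity
  have hτle : τ ≤ 1 := pow_le_one₀ (by norm_num) (by norm_num)
  have hT2ge : (1:ℝ) ≤ T2 := one_le_pow₀ (by norm_num)
  set LL : ℝ := 3 * T2 / τ with hLL_def
  have hLL1 : 1 ≤ LL := by
    rw [hLL_def, le_div_iff₀ hτpos]
    nlinarith
  have hLLpos : 0 < LL := lt_of_lt_of_le one_pos hLL1
  -- facts about indices in the fiber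
  have hfibt : ∀ i, Nat.find (htex i) = k₀ → τ < (sd i).t ∧ (sd i).t ≤ ((2:ℝ)⁻¹) ^ k₀ := by
    intro i hi
    constructor
    · have hspec := Nat.find_spec (htex i)
      rwa [hi] at hspec
    · rcases Nat.eq_zero_or_pos k₀ with h0 | hpos
      · rw [h0]
        simpa using (sd i).ht1
      · have hmin := Nat.find_min (htex i) (m := k₀ - 1) (by omega)
        rw [not_lt] at hmin
        have hk : k₀ - 1 + 1 = k₀ := by omega
        rwa [hk] at hmin
  have hfibD : ∀ i, Nat.find (hDex i) = l₀ → (sd i).D < T2 := by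
    intro i hi
    have hspec := Nat.find_spec (hDex i)
    rwa [hi] at hspec
  have hfibL : ∀ i, Nat.find (htex i) = k₀ → Nat.find (hDex i) = l₀ →
      3 * (sd i).D / (sd i).t ≤ LL := by
    intro i h1 h2
    have ht1 := (hfibt i h1).1
    have hD1 := hfibD i h2
    have hD0 : 1 ≤ (sd i).D := (sd i).hD
    exact div_le_div₀ (by nlinarith) (by nlinarith) hτpos ht1.le
  -- disjointness of supports within the fiber
  have hdisj : ∀ i j, Nat.find (htex i) = k₀ → Nat.find (htex j) = k₀ → i < j →
      ∀ x : M, (sd i).g x ≠ 0 → (sd j).g x = 0 := by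
    intro i j hi hj hij x hgx
    have h1 : infDist x (sd i).C < (sd i).t / 3 := by
      by_contra hcon
      push_neg at hcon
      have hcone := (sd i).hcone x
      rw [max_eq_left (by linarith)] at hcone
      rw [mul_zero] at hcone
      exact hgx (abs_eq_zero.mp (le_antisymm hcone (abs_nonneg _)))
    apply (sd j).hvan
    have h2 : infDist x (sd j).S ≤ infDist x (sd i).C :=
      Metric.infDist_le_infDist_of_subset (hchain i j hij) ⟨o, (sd i).hoC⟩
    have h3 : (sd i).t / 3 ≤ τ := by
      have hub := (hfibt i hi).2
      have hpow : ((2:ℝ)⁻¹) ^ k₀ / 3 ≤ ((2:ℝ)⁻¹) ^ (k₀ + 1) := by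
        rw [pow_succ]
        nlinarith [pow_pos (by norm_num : (0:ℝ) < 2⁻¹) k₀]
      calc (sd i).t / 3 ≤ ((2:ℝ)⁻¹) ^ k₀ / 3 := by linarith
        _ ≤ τ := hpow
    have h4 : τ < (sd j).t := (hfibt j hj).1
    linarith
  -- the ℕ-indexed subsequence
  have e := hinf.natEmbedding
  set seq : ℕ → SDIdx := fun m => (e m : _) with hseq_def
  have hseqk : ∀ m, Nat.find (htex (seq m)) = k₀ := fun m => (e m).2.1
  have hseql : ∀ m, Nat.find (hDex (seq m)) = l₀ := fun m => (e m).2.2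
  have hseqinj : Function.Injective seq := fun a b hab =>
    e.injective (Subtype.coe_injective hab)
  have hterm : ∀ m (x y : M), |(sd (seq m)).g x - (sd (seq m)).g y| ≤ LL * dist x y := by
    intro m x y
    refine ((sd (seq m)).hglip x y).trans ?_
    exact mul_le_mul_of_nonneg_right (hfibL _ (hseqk m) (hseql m)) dist_nonneg
  have hone : ∀ (x : M) (m m' : ℕ), m ≠ m' → (sd (seq m)).g x ≠ 0 → (sd (seq m')).g x = 0 := by
    intro x m m' hne hgx
    have hij : seq m ≠ seq m' := fun h => hne (hseqinj h)
    rcases lt_or_gt_of_ne hij with h | h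
    · exact hdisj _ _ (hseqk m) (hseqk m') h x hgx
    · by_contra hg'
      exact hgx (hdisj _ _ (hseqk m') (hseqk m) h x hg')
  -- the ℓ¹-orthogonality estimate
  have hsum : ∀ (s : Finset ℕ) (σ : ℕ → ℝ), (∀ m, |σ m| ≤ 1) → ∀ x y : M,
      |∑ m ∈ s, σ m * ((sd (seq m)).g x - (sd (seq m)).g y)| ≤ 2 * LL * dist x y := by
    intro s σ hσ x y
    have hcard : (s.filter fun m => (sd (seq m)).g x ≠ 0 ∨ (sd (seq m)).g y ≠ 0).card ≤ 2 := by
      have hsubf : (s.filter fun m => (sd (seq m)).g x ≠ 0 ∨ (sd (seq m)).g y ≠ 0) ⊆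
          (s.filter fun m => (sd (seq m)).g x ≠ 0) ∪ (s.filter fun m => (sd (seq m)).g y ≠ 0) := by
        rw [← Finset.filter_or]
      have hx1 : (s.filter fun m => (sd (seq m)).g x ≠ 0).card ≤ 1 := by
        rw [Finset.card_le_one]
        intro a ha b hb
        rw [Finset.mem_filter] at ha hb
        by_contra hab
        exact hb.2 (hone x a b hab ha.2)
      have hy1 : (s.filter fun m => (sd (seq m)).g y ≠ 0).card ≤ 1 := by
        rw [Finset.card_le_one]
        intro a ha b hb
        rw [Finset.mem_filter] at ha hb
        by_contra hab
        exact hb.2 (hone y a b hab ha.2)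
      calc (s.filter fun m => (sd (seq m)).g x ≠ 0 ∨ (sd (seq m)).g y ≠ 0).card
          ≤ ((s.filter fun m => (sd (seq m)).g x ≠ 0) ∪
             (s.filter fun m => (sd (seq m)).g y ≠ 0)).card := Finset.card_le_card hsubf
        _ ≤ _ := Finset.card_union_le _ _
        _ ≤ 2 := by omega
    calc |∑ m ∈ s, σ m * ((sd (seq m)).g x - (sd (seq m)).g y)|
        ≤ ∑ m ∈ s, |σ m * ((sd (seq m)).g x - (sd (seq m)).g y)| :=
          Finset.abs_sum_le_sum_abs _ _
      _ = ∑ m ∈ s.filter (fun m => (sd (seq m)).g x ≠ 0 ∨ (sd (seq m)).g y ≠ 0),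
            |σ m * ((sd (seq m)).g x - (sd (seq m)).g y)| := by
          refine (Finset.sum_filter_of_ne ?_).symm
          intro m _ hne
          by_contra hcon
          push_neg at hcon
          exact hne (by rw [hcon.1, hcon.2, sub_self, mul_zero, abs_zero])
      _ ≤ (s.filter (fun m => (sd (seq m)).g x ≠ 0 ∨ (sd (seq m)).g y ≠ 0)).card •
            (LL * dist x y) := by
          refine Finset.sum_le_card_nsmul _ _ _ ?_
          intro m _
          rw [abs_mul]
          calc |σ m| * |(sd (seq m)).g x - (sd (seq m)).g y|
              ≤ 1 * (LL * dist x y) :=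
                mul_le_mul (hσ m) (hterm m x y) (abs_nonneg _) zero_le_one
            _ = LL * dist x y := one_mul _
      _ ≤ 2 * (LL * dist x y) := by
          rw [nsmul_eq_mul]
          refine mul_le_mul_of_nonneg_right ?_ (by positivity)
          exact_mod_cast hcard
      _ = 2 * LL * dist x y := by ring
  -- the WUC sequence
  have hWUC : IsWUC (fun m => (sd (seq m)).ψ) := by
    intro Φ
    refine summable_of_sum_range_le (c := ‖Φ‖ * (2 * LL)) (fun m => abs_nonneg _) ?_
    intro m
    set σ : ℕ → ℝ := fun j => if 0 ≤ Φ ((sd (seq j)).ψ) then 1 else -1 with hσ_def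
    have hσ1 : ∀ j, |σ j| ≤ 1 := by
      intro j
      by_cases h : 0 ≤ Φ ((sd (seq j)).ψ) <;> simp [hσ_def, h]
    have habs : ∀ j, |Φ ((sd (seq j)).ψ)| = σ j * Φ ((sd (seq j)).ψ) := by
      intro j
      by_cases h : 0 ≤ Φ ((sd (seq j)).ψ)
      · rw [abs_of_nonneg h, hσ_def]
        simp [h]
      · push_neg at h
        rw [abs_of_neg h, hσ_def]
        simp [not_le.mpr h]
    set θ : F →L[ℝ] ℝ := ∑ j ∈ Finset.range m, σ j • (sd (seq j)).ψ with hθ_def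
    have hθnorm : ‖θ‖ ≤ 2 * LL := by
      set hfun : M → ℝ := fun x => ∑ j ∈ Finset.range m, σ j * (sd (seq j)).g x with hfun_def
      have hflip : LipschitzWith (Real.toNNReal (2 * LL)) hfun := by
        refine LipschitzWith.of_dist_le_mul fun x y => ?_
        rw [Real.dist_eq, Real.coe_toNNReal _ (by positivity)]
        have hdiff : hfun x - hfun y
            = ∑ j ∈ Finset.range m, σ j * ((sd (seq j)).g x - (sd (seq j)).g y) := by
          rw [hfun_def, ← Finset.sum_sub_distrib]
          exact Finset.sum_congr rfl fun j _ => by ring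
        rw [hdiff]
        exact hsum _ σ hσ1 x y
      have hfo : hfun o = 0 := by
        rw [hfun_def]
        simp [(sd _).hgo]
      obtain ⟨Θ, hΘn, hΘδ⟩ := hδ.lift _ hfun hflip hfo
      have hΘeq : Θ = θ := by
        refine ContinuousLinearMap.ext_on hδ.dense_span ?_
        rintro z ⟨x, rfl⟩
        rw [hΘδ, hθ_def, hfun_def]
        rw [ContinuousLinearMap.sum_apply]
        exact Finset.sum_congr rfl fun j _ => by
          rw [ContinuousLinearMap.smul_apply, smul_eq_mul, (sd (seq j)).hψδ]
      rw [← hΘeq]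
      refine hΘn.trans_eq ?_
      exact Real.coe_toNNReal _ (by positivity)
    calc ∑ j ∈ Finset.range m, |Φ ((sd (seq j)).ψ)|
        = ∑ j ∈ Finset.range m, σ j * Φ ((sd (seq j)).ψ) :=
          Finset.sum_congr rfl fun j _ => habs j
      _ = Φ θ := by
          rw [hθ_def, map_sum]
          exact Finset.sum_congr rfl fun j _ => by rw [map_smul, smul_eq_mul]
      _ ≤ |Φ θ| := le_abs_self _
      _ ≤ ‖Φ‖ * ‖θ‖ := by
          rw [← Real.norm_eq_abs]
          exact Φ.le_opNorm θ
      _ ≤ ‖Φ‖ * (2 * LL) := mul_le_mul_of_nonneg_left hθnorm (norm_nonneg _)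
  -- contradiction with the (V*) property
  have hev := hΓ (fun m => (sd (seq m)).ψ) hWUC (ε / 8) (by positivity)
  rw [Filter.eventually_atTop] at hev
  obtain ⟨N, hN⟩ := hev
  have h1 := hN N le_rfl ((sd (seq N)).μ) ((sd (seq N)).hμΓ)
  have h2 : ε / 4 ≤ |(sd (seq N)).ψ ((sd (seq N)).μ)| :=
    le_trans (sd (seq N)).hpair (le_abs_self _)
  linarith
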